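/- Let r ≥ 2 and let m ≥ 1 be an integer. Then the following two statements are equivalent: (i) for all integers k₁ ≥ k₂ ≥ … ≥ k_r, not all zero, one has Σ_{j=1}^r k_j·(k_j + (m/2)·(r − 2j + 1)) ≥ 1 + (m/2)·(r − 1); (ii) m ≤ 2. -/

import Mathlib

open Finset

-- sum of coefficients r - 2j - 1 over j < n
lemma stmt14aux_Asum (r : ℕ) : ∀ n : ℕ, ∑ j ∈ Finset.range n, ((r:ℝ) - 2*(j:ℝ) - 1)
    = (n:ℝ) * ((r:ℝ) - (n:ℝ)) := by
  intro n
  induction n with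
  | zero => simp
  | succ n ih =>
    rw [Finset.sum_range_succ, ih]
    push_cast
    ring

lemma stmt14aux_chain (f : ℕ → ℤ) : ∀ n : ℕ, (∀ i < n, f i = f (i+1)) → f 0 = f n := by
  intro n
  induction n with
  | zero => intro _; rfl
  | succ n ih =>
    intro h
    rw [ih (fun i hi => h i (by omega))]
    exact h n (by omega)

theorem stmt14 {r : ℕ} (hr : 2 ≤ r) (m : ℤ) (hm : 1 ≤ m) :
    (∀ k : Fin r → ℤ, (∀ i j : Fin r, i ≤ j → k j ≤ k i) → (∃ j, k j ≠ 0) →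
      (1 : ℝ) + ((m : ℝ) / 2) * ((r : ℝ) - 1) ≤
        ∑ j : Fin r, (k j : ℝ) *
          ((k j : ℝ) + ((m : ℝ) / 2) * ((r : ℝ) - 2 * (((j : ℕ) : ℝ) + 1) + 1))) ↔
    m ≤ 2 := by
  have hrR : (2:ℝ) ≤ (r:ℝ) := by exact_mod_cast hr
  have hmR : (1:ℝ) ≤ (m:ℝ) := by exact_mod_cast hm
  set c : ℝ := (m:ℝ)/2 with hc
  have hc0 : 0 < c := by positivity
  have hAall : ∑ j : Fin r, ((r:ℝ) - 2*((j:ℕ):ℝ) - 1) = 0 := by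
    rw [Fin.sum_univ_eq_sum_range (fun j => ((r:ℝ) - 2*(j:ℝ) - 1)) r, stmt14aux_Asum]
    ring
  constructor
  · -- forward: test with k = 1
    intro H
    have h1 := H (fun _ => 1) (fun i j _ => le_refl _) ⟨⟨0, by omega⟩, one_ne_zero⟩
    have hval : ∑ j : Fin r, ((1:ℤ):ℝ) * (((1:ℤ):ℝ) + c * ((r:ℝ) - 2*(((j:ℕ):ℝ)+1) + 1))
        = (r:ℝ) := by
      have : ∀ j : Fin r, ((1:ℤ):ℝ) * (((1:ℤ):ℝ) + c * ((r:ℝ) - 2*(((j:ℕ):ℝ)+1) + 1))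
          = 1 + c * ((r:ℝ) - 2*((j:ℕ):ℝ) - 1) := by intro j; push_cast; ring
      rw [Finset.sum_congr rfl (fun j _ => this j), Finset.sum_add_distrib, ← Finset.mul_sum,
        hAall]
      simp [Finset.card_univ]
    rw [hval] at h1
    have : (m:ℝ) ≤ 2 := by nlinarith
    exact_mod_cast this
  · -- backward
    intro hm2 k hdec hne
    have hm2R : (m:ℝ) ≤ 2 := by exact_mod_cast hm2
    -- rewrite the sum
    have hsplit : ∑ j : Fin r, (k j : ℝ) *
          ((k j : ℝ) + c * ((r : ℝ) - 2 * (((j : ℕ) : ℝ) + 1) + 1))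
        = (∑ j : Fin r, ((k j:ℝ))^2)
          + c * ∑ j : Fin r, (k j:ℝ) * ((r:ℝ) - 2*((j:ℕ):ℝ) - 1) := by
      rw [Finset.mul_sum, ← Finset.sum_add_distrib]
      exact Finset.sum_congr rfl (fun j _ => by ring)
    rw [hsplit]
    set Q : ℝ := ∑ j : Fin r, ((k j:ℝ))^2 with hQ
    set T : ℝ := ∑ j : Fin r, (k j:ℝ) * ((r:ℝ) - 2*((j:ℕ):ℝ) - 1) with hT
    by_cases hall : ∀ j : Fin r, k j = k ⟨0, by omega⟩
    · -- all equal
      obtain ⟨j0, hj0⟩ := hne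
      have ha0 : k ⟨0, by omega⟩ ≠ 0 := by rw [← hall j0]; exact hj0
      have ha1 : (1:ℝ) ≤ ((k ⟨0, by omega⟩ : ℤ):ℝ)^2 := by
        have : 1 ≤ (k ⟨0, by omega⟩)^2 := by
          rcases lt_or_gt_of_ne ha0 with h | h <;> nlinarith
        exact_mod_cast this
      set a0 : ℝ := ((k ⟨0, by omega⟩ : ℤ):ℝ) with ha0d
      have hQv : Q = (r:ℝ) * a0^2 := by
        rw [hQ]
        rw [Finset.sum_congr rfl (fun j _ => by rw [hall j])]
        simp [Finset.card_univ, mul_comm]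
        exact Or.inl rfl
      have hTv : T = 0 := by
        rw [hT, Finset.sum_congr rfl (fun j _ => by rw [hall j]), ← Finset.mul_sum, hAall,
          mul_zero]
      rw [hQv, hTv]
      nlinarith
    · -- not all equal
      push_neg at hall
      obtain ⟨j1, hj1⟩ := hall
      have hk0 : k j1 < k ⟨0, by omega⟩ :=
        lt_of_le_of_ne (hdec ⟨0, by omega⟩ j1 (by simp [Fin.le_def])) hj1
      have hlast : k ⟨r-1, by omega⟩ ≤ k j1 :=
        hdec j1 ⟨r-1, by omega⟩ (by simp [Fin.le_def]; omega)
      have hdrop : k ⟨r-1, by omega⟩ < k ⟨0, by omega⟩ := lt_of_le_of_lt hlast hk0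
      -- Q ≥ 1
      have hQ1 : (1:ℝ) ≤ Q := by
        have hex : ∃ j : Fin r, k j ≠ 0 := by
          by_cases h0 : k ⟨0, by omega⟩ = 0
          · exact ⟨⟨r-1, by omega⟩, by omega⟩
          · exact ⟨⟨0, by omega⟩, h0⟩
        obtain ⟨j0, hj0⟩ := hex
        have h1 : (1:ℝ) ≤ ((k j0:ℤ):ℝ)^2 := by
          have : 1 ≤ (k j0)^2 := by
            rcases lt_or_gt_of_ne hj0 with h | h <;> nlinarith
          exact_mod_cast this
        refine le_trans h1 ?_
        exact Finset.single_le_sum (f := fun j : Fin r => ((k j:ℤ):ℝ)^2)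
          (fun j _ => sq_nonneg _) (Finset.mem_univ j0)
      -- T ≥ r - 1 via Abel summation
      have hT1 : (r:ℝ) - 1 ≤ T := by
        obtain ⟨KZ, hKZ, hanti⟩ : ∃ KZ : ℕ → ℤ, (∀ j : Fin r, KZ (j:ℕ) = k j) ∧
            (∀ p q : ℕ, p ≤ q → KZ q ≤ KZ p) := by
          refine ⟨fun n => k ⟨min n (r-1), by omega⟩, ?_, ?_⟩
          · intro j
            have h1 : (⟨min (j:ℕ) (r-1), by omega⟩ : Fin r) = j := by
              apply Fin.ext
              have := j.isLt
              simp only []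
              omega
            simp only [h1]
          · intro p q hpq
            exact hdec _ _ (by simp [Fin.le_def]; omega)
        have hTx : T = ∑ i ∈ Finset.range r, ((KZ i : ℤ):ℝ) * ((r:ℝ) - 2*(i:ℝ) - 1) := by
          rw [hT, ← Fin.sum_univ_eq_sum_range (fun i => ((KZ i : ℤ):ℝ) * ((r:ℝ) - 2*(i:ℝ) - 1)) r]
          exact Finset.sum_congr rfl (fun j _ => by rw [hKZ j])
        have habel := Finset.sum_range_by_parts (fun i => ((KZ i : ℤ):ℝ))
          (fun i => (r:ℝ) - 2*(i:ℝ) - 1) r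
        simp only [smul_eq_mul] at habel
        rw [hTx, habel, stmt14aux_Asum r r, sub_self, mul_zero, mul_zero, zero_sub]
        rw [← Finset.sum_neg_distrib]
        have hterm : ∀ i ∈ Finset.range (r-1),
            -((((KZ (i+1) : ℤ):ℝ) - ((KZ i : ℤ):ℝ)) * ∑ j ∈ Finset.range (i+1), ((r:ℝ) - 2*(j:ℝ) - 1))
            = (((KZ i : ℤ):ℝ) - ((KZ (i+1) : ℤ):ℝ)) * (((i:ℝ)+1) * ((r:ℝ) - ((i:ℝ)+1))) := by
          intro i _
          rw [stmt14aux_Asum r (i+1)]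
          push_cast
          ring
        rw [Finset.sum_congr rfl hterm]
        -- find a drop
        have hKZ0 : KZ 0 = k ⟨0, by omega⟩ := by
          have := hKZ ⟨0, by omega⟩; simpa using this
        have hKZlast : KZ (r-1) = k ⟨r-1, by omega⟩ := by
          have := hKZ ⟨r-1, by omega⟩; simpa using this
        have hdropt : ∃ t, t < r-1 ∧ KZ (t+1) < KZ t := by
          by_contra hcon
          push_neg at hcon
          have : KZ 0 = KZ (r-1) := by
            apply stmt14aux_chain
            intro i hi
            exact le_antisymm (hcon i hi) (hanti i (i+1) (by omega))
          omega
        obtain ⟨t, ht, hKt⟩ := hdropt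
        have hnn : ∀ i ∈ Finset.range (r-1),
            0 ≤ (((KZ i : ℤ):ℝ) - ((KZ (i+1) : ℤ):ℝ)) * (((i:ℝ)+1) * ((r:ℝ) - ((i:ℝ)+1))) := by
          intro i hi
          rw [Finset.mem_range] at hi
          have h1 : ((KZ (i+1) : ℤ):ℝ) ≤ ((KZ i : ℤ):ℝ) := by
            exact_mod_cast hanti i (i+1) (by omega)
          have h2 : ((i:ℝ)+1) ≤ (r:ℝ) := by
            have : i + 1 ≤ r := by omega
            exact_mod_cast this
          exact mul_nonneg (sub_nonneg.mpr h1)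
            (mul_nonneg (by positivity) (sub_nonneg.mpr h2))
        have hsingle : (((KZ t : ℤ):ℝ) - ((KZ (t+1) : ℤ):ℝ)) * (((t:ℝ)+1) * ((r:ℝ) - ((t:ℝ)+1)))
            ≤ ∑ i ∈ Finset.range (r-1),
              (((KZ i : ℤ):ℝ) - ((KZ (i+1) : ℤ):ℝ)) * (((i:ℝ)+1) * ((r:ℝ) - ((i:ℝ)+1))) :=
          Finset.single_le_sum hnn (Finset.mem_range.mpr ht)
        refine le_trans ?_ hsingle
        have h1 : (1:ℝ) ≤ ((KZ t : ℤ):ℝ) - ((KZ (t+1) : ℤ):ℝ) := by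
          have h : KZ (t+1) + 1 ≤ KZ t := hKt
          have h' : ((KZ (t+1) :ℤ):ℝ) + 1 ≤ ((KZ t:ℤ):ℝ) := by exact_mod_cast h
          linarith
        have h2 : (1:ℝ) ≤ (t:ℝ) + 1 := by
          have : (0:ℝ) ≤ (t:ℝ) := Nat.cast_nonneg t
          linarith
        have h3 : (1:ℝ) ≤ (r:ℝ) - ((t:ℝ)+1) := by
          have h : t + 2 ≤ r := by omega
          have h' : ((t:ℕ):ℝ) + 2 ≤ (r:ℝ) := by exact_mod_cast h
          linarith
        have hab0 : (0:ℝ) ≤ ((t:ℝ)+1) * ((r:ℝ) - ((t:ℝ)+1)) := by nlinarith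
        have hab : (r:ℝ) - 1 ≤ ((t:ℝ)+1) * ((r:ℝ) - ((t:ℝ)+1)) := by nlinarith
        exact le_trans hab (le_mul_of_one_le_left hab0 h1)
      -- combine
      have := mul_le_mul_of_nonneg_left hT1 hc0.le
      linarith
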